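/- Let X be a metric space, n ≥ 1 an integer, and μ the n-dimensional Hausdorff measure on X. Let V ⊆ X be a subset, c ∈ (0, 1], and φ : V → X an injective map such that for all x, y ∈ V, sinh(dist(φ(x), φ(y))/2) ≥ c · sinh(dist(x, y)/2). Then μ(φ(V)) ≥ cⁿ · μ(V). -/

import Mathlib

open MeasureTheory Real
open scoped NNReal ENNReal

lemma convexOn_sinh_Ici : ConvexOn ℝ (Set.Ici (0:ℝ)) Real.sinh := by
  apply convexOn_of_deriv2_nonneg (convex_Ici 0) Real.continuous_sinh.continuousOn
    Real.differentiable_sinh.differentiableOn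
  · rw [Real.deriv_sinh]
    exact Real.differentiable_cosh.differentiableOn
  · intro x hx
    simp only [Function.iterate_succ, Function.iterate_zero, Function.comp_apply, id_eq,
      Real.deriv_sinh, Real.deriv_cosh]
    have hx0 : (0:ℝ) ≤ x := le_of_lt (by simpa using hx)
    calc (0:ℝ) = Real.sinh 0 := by rw [Real.sinh_zero]
    _ ≤ Real.sinh x := Real.sinh_le_sinh.mpr hx0

lemma sinh_mul_le {c t : ℝ} (hc0 : 0 ≤ c) (hc1 : c ≤ 1) (ht : 0 ≤ t) :
    Real.sinh (c * t) ≤ c * Real.sinh t := by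
  have h := convexOn_sinh_Ici.2 (Set.mem_Ici.2 ht) (Set.mem_Ici.2 le_rfl) hc0
    (by linarith : (0:ℝ) ≤ 1 - c) (by ring)
  simpa [smul_eq_mul, Real.sinh_zero] using h

/-- Lemma 4.4, case κ = −1: an injection that expands sinh of half-distances by
a factor c ∈ (0,1] increases n-dimensional Hausdorff measure by at least cⁿ. -/
theorem hausdorff_measure_image_ge_of_sinh_expansion
    {X : Type*} [MetricSpace X] [MeasurableSpace X] [BorelSpace X]
    (n : ℕ) (hn : 1 ≤ n) (V : Set X)
    (c : ℝ) (hc0 : 0 < c) (hc1 : c ≤ 1)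
    (φ : X → X) (hinj : Set.InjOn φ V)
    (hexp : ∀ x ∈ V, ∀ y ∈ V,
      Real.sinh (dist (φ x) (φ y) / 2) ≥ c * Real.sinh (dist x y / 2)) :
    μH[(n : ℝ)] (φ '' V) ≥ ENNReal.ofReal (c ^ n) * μH[(n : ℝ)] V := by
  rcases V.eq_empty_or_nonempty with rfl | ⟨x0, hx0⟩
  · simp
  have : Nonempty X := ⟨x0⟩
  -- φ expands distances by factor c
  have hdist : ∀ x ∈ V, ∀ y ∈ V, c * dist x y ≤ dist (φ x) (φ y) := by
    intro x hx y hy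
    have h1 : Real.sinh (c * (dist x y / 2)) ≤ c * Real.sinh (dist x y / 2) :=
      sinh_mul_le hc0.le hc1 (by positivity)
    have h3 : Real.sinh (c * (dist x y / 2)) ≤ Real.sinh (dist (φ x) (φ y) / 2) :=
      h1.trans (hexp x hx y hy)
    have h4 : c * (dist x y / 2) ≤ dist (φ x) (φ y) / 2 :=
      Real.sinh_le_sinh.mp h3
    linarith
  -- the inverse function is (1/c)-Lipschitz on φ '' V
  set K : ℝ≥0 := ⟨c, hc0.le⟩ with hK
  set ψ := Function.invFunOn φ V with hψ
  have hψmem : ∀ z ∈ φ '' V, ψ z ∈ V ∧ φ (ψ z) = z := by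
    intro z hz
    exact ⟨Function.invFunOn_mem hz, Function.invFunOn_eq hz⟩
  have hLip : LipschitzOnWith K⁻¹ ψ (φ '' V) := by
    intro a ha b hb
    obtain ⟨haV, hfa⟩ := hψmem a ha
    obtain ⟨hbV, hfb⟩ := hψmem b hb
    have hd := hdist (ψ a) haV (ψ b) hbV
    rw [hfa, hfb] at hd
    rw [edist_dist, edist_dist, ← ENNReal.ofReal_coe_nnreal, ← ENNReal.ofReal_mul (by positivity)]
    apply ENNReal.ofReal_le_ofReal
    have hle : dist (ψ a) (ψ b) ≤ c⁻¹ * dist a b := by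
      rw [le_inv_mul_iff₀ hc0]; exact hd
    calc dist (ψ a) (ψ b) ≤ c⁻¹ * dist a b := hle
    _ = ((K⁻¹ : ℝ≥0) : ℝ) * dist a b := by
        congr 1
  have himg : ψ '' (φ '' V) = V := by
    apply Set.Subset.antisymm
    · rintro _ ⟨z, hz, rfl⟩
      exact (hψmem z hz).1
    · intro x hx
      exact ⟨φ x, Set.mem_image_of_mem φ hx, hinj (hψmem _ (Set.mem_image_of_mem φ hx)).1 hx
        (hψmem _ (Set.mem_image_of_mem φ hx)).2⟩
  have key := hLip.hausdorffMeasure_image_le (d := (n:ℝ)) (Nat.cast_nonneg n)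
  rw [himg] at key
  -- key : μH V ≤ (K⁻¹)^n * μH (φ '' V)
  have hK0 : K ≠ 0 := fun h => hc0.ne' (congrArg NNReal.toReal h)
  have hKne : (K:ℝ≥0∞) ≠ 0 := by
    simp only [ne_eq, ENNReal.coe_eq_zero, hK]
    exact fun h => hK0 (ENNReal.coe_eq_zero.mp h)
  have hcoef : ENNReal.ofReal (c ^ n) = (K:ℝ≥0∞) ^ n := by
    rw [← ENNReal.coe_pow, ENNReal.ofReal_eq_coe_nnreal (by positivity)]
    congr 1
  calc ENNReal.ofReal (c ^ n) * μH[(n : ℝ)] V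
      ≤ (K:ℝ≥0∞) ^ n * (((K⁻¹ : ℝ≥0) : ℝ≥0∞) ^ (n:ℝ) * μH[(n : ℝ)] (φ '' V)) := by
        rw [hcoef]; exact mul_le_mul_right key _
    _ = ((K:ℝ≥0∞) ^ n * ((K:ℝ≥0∞))⁻¹ ^ n) * μH[(n : ℝ)] (φ '' V) := by
        rw [ENNReal.coe_inv hK0, ENNReal.rpow_natCast]
        ring
    _ = μH[(n : ℝ)] (φ '' V) := by
        rw [← mul_pow, ENNReal.mul_inv_cancel hKne ENNReal.coe_ne_top, one_pow, one_mul]
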